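/- Let (G, τ) be a paratopological group and let α be an infinite cardinal. Then (G, τ_α) is a paratopological group, where τ_α is the P_α-modification of τ, i.e., the coarsest topology containing τ in which every intersection of fewer than α open sets is open. -/
import Mathlib

open TopologicalSpace Set

/-- A topology `t` on `X` is a `P_α`-topology if every intersection of fewer than `α`
open sets is open. -/
def IsPAlpha {X : Type*} (α : Cardinal) (t : TopologicalSpace X) : Prop :=
  ∀ C : Set (Set X), (∀ U ∈ C, t.IsOpen U) → Cardinal.mk C < α → t.IsOpen (⋂₀ C)

/-- The `P_α`-modification of a topology: the coarsest `P_α`-topology containing it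
(i.e. the intersection of all `P_α`-topologies finer than `t`). -/
def pAlphaModification {X : Type*} (α : Cardinal) (t : TopologicalSpace X) :
    TopologicalSpace X :=
  sSup {s : TopologicalSpace X | s ≤ t ∧ IsPAlpha α s}

universe u

/-- Inductive closure of the open sets of `t` under intersections of fewer than `α` sets. -/
inductive PC {G : Type u} (α : Cardinal.{u}) (t : TopologicalSpace G) : Set G → Prop
  | basic (U : Set G) (h : t.IsOpen U) : PC α t U
  | inter (S : Set (Set G)) (h : ∀ U ∈ S, PC α t U) (hS : Cardinal.mk S < α) : PC α t (⋂₀ S)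

variable {G : Type u} {α : Cardinal.{u}} {t : TopologicalSpace G}

lemma PC.univ (hα : Cardinal.aleph0 ≤ α) : PC α t Set.univ := by
  have : (Set.univ : Set G) = ⋂₀ (∅ : Set (Set G)) := by simp
  rw [this]
  exact PC.inter ∅ (by simp) (lt_of_lt_of_le (Set.finite_empty.lt_aleph0) hα)

lemma PC.pair_inter (hα : Cardinal.aleph0 ≤ α) {U V : Set G}
    (hU : PC α t U) (hV : PC α t V) : PC α t (U ∩ V) := by
  have : U ∩ V = ⋂₀ ({U, V} : Set (Set G)) := by simp
  rw [this]
  refine PC.inter _ ?_ (lt_of_lt_of_le (((Set.finite_singleton _).insert _).lt_aleph0) hα)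
  rintro W (rfl | rfl) <;> assumption

lemma isOpen_s0_iff (hα : Cardinal.aleph0 ≤ α) {V : Set G} :
    (generateFrom {U | PC α t U}).IsOpen V ↔
      ∀ x ∈ V, ∃ B, PC α t B ∧ x ∈ B ∧ B ⊆ V := by
  constructor
  · intro h
    induction h with
    | basic U hU => exact fun x hx => ⟨U, hU, hx, subset_rfl⟩
    | univ => exact fun x _ => ⟨Set.univ, PC.univ hα, trivial, subset_rfl⟩
    | inter U V hU hV ihU ihV =>
        intro x hx
        obtain ⟨B1, hB1, hx1, hs1⟩ := ihU x hx.1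
        obtain ⟨B2, hB2, hx2, hs2⟩ := ihV x hx.2
        exact ⟨B1 ∩ B2, PC.pair_inter hα hB1 hB2, ⟨hx1, hx2⟩, Set.inter_subset_inter hs1 hs2⟩
    | sUnion S hS ih =>
        intro x hx
        obtain ⟨U, hUS, hxU⟩ := hx
        obtain ⟨B, h1, h2, h3⟩ := ih U hUS x hxU
        exact ⟨B, h1, h2, h3.trans (Set.subset_sUnion_of_mem hUS)⟩
  · intro h
    choose B hB hxB hBV using h
    have hV : V = ⋃ (x : G) (hx : x ∈ V), B x hx := by
      ext y
      constructor
      · intro hy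
        exact Set.mem_iUnion₂.2 ⟨y, hy, hxB y hy⟩
      · intro hy
        obtain ⟨x, hx, hyB⟩ := Set.mem_iUnion₂.1 hy
        exact hBV x hx hyB
    rw [hV]
    letI s0 : TopologicalSpace G := generateFrom {U | PC α t U}
    exact isOpen_iUnion fun x => isOpen_iUnion fun hx =>
      TopologicalSpace.GenerateOpen.basic _ (hB x hx)

lemma s0_PAlpha (hα : Cardinal.aleph0 ≤ α) :
    IsPAlpha α (generateFrom {U | PC α t U}) := by
  intro C hC hCα
  rw [isOpen_s0_iff hα]
  intro x hx
  have h' : ∀ U : C, ∃ B, PC α t B ∧ x ∈ B ∧ B ⊆ (U : Set G) := fun U =>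
    (isOpen_s0_iff hα).1 (hC U U.2) x (hx U U.2)
  choose B hB hxB hBU using h'
  refine ⟨⋂₀ Set.range B, PC.inter _ ?_ (lt_of_le_of_lt Cardinal.mk_range_le hCα), ?_, ?_⟩
  · rintro W ⟨U, rfl⟩; exact hB U
  · rintro W ⟨U, rfl⟩; exact hxB U
  · intro y hy U hU
    exact hBU ⟨U, hU⟩ (hy _ ⟨⟨U, hU⟩, rfl⟩)

lemma PC.isOpen_of_mem {s : TopologicalSpace G} (hst : s ≤ t) (hsP : IsPAlpha α s)
    {U : Set G} (hU : PC α t U) : s.IsOpen U := by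
  induction hU with
  | basic U h => exact hst _ h
  | inter S h hcard ih => exact hsP S ih hcard

lemma PC.mul_key [Group G] (hα : Cardinal.aleph0 ≤ α) (ht : @ContinuousMul G t _)
    {W : Set G} (hW : PC α t W) :
    ∀ a b : G, a * b ∈ W → ∃ U V, PC α t U ∧ PC α t V ∧ a ∈ U ∧ b ∈ V ∧
      ∀ x ∈ U, ∀ y ∈ V, x * y ∈ W := by
  induction hW with
  | basic U hU =>
      intro a b hab
      letI := t
      have hc : Continuous (fun p : G × G => p.1 * p.2) := ht.continuous_mul
      have hop : IsOpen ((fun p : G × G => p.1 * p.2) ⁻¹' U) := hc.isOpen_preimage _ hU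
      rw [isOpen_prod_iff] at hop
      obtain ⟨U1, V1, hU1, hV1, ha, hb, hsub⟩ := hop a b hab
      exact ⟨U1, V1, PC.basic _ hU1, PC.basic _ hV1, ha, hb,
        fun x hx y hy => hsub (Set.mk_mem_prod hx hy)⟩
  | inter S hS hcard ih =>
      intro a b hab
      have h' : ∀ T : S, ∃ U V, PC α t U ∧ PC α t V ∧ a ∈ U ∧ b ∈ V ∧
          ∀ x ∈ U, ∀ y ∈ V, x * y ∈ (T : Set G) := fun T =>
        ih T T.2 a b (hab T T.2)
      choose U V hU hV haU hbV hsub using h'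
      refine ⟨⋂₀ Set.range U, ⋂₀ Set.range V,
        PC.inter _ ?_ (lt_of_le_of_lt Cardinal.mk_range_le hcard),
        PC.inter _ ?_ (lt_of_le_of_lt Cardinal.mk_range_le hcard), ?_, ?_, ?_⟩
      · rintro X ⟨T, rfl⟩; exact hU T
      · rintro X ⟨T, rfl⟩; exact hV T
      · rintro X ⟨T, rfl⟩; exact haU T
      · rintro X ⟨T, rfl⟩; exact hbV T
      · intro x hx y hy T hT
        exact hsub ⟨T, hT⟩ x (hx _ ⟨⟨T, hT⟩, rfl⟩) y (hy _ ⟨⟨T, hT⟩, rfl⟩)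

theorem stmt_3 {G : Type*} [Group G] (t : TopologicalSpace G)
    (ht : @ContinuousMul G t _) (α : Cardinal) (hα : Cardinal.aleph0 ≤ α) :
    @ContinuousMul G (pAlphaModification α t) _ := by
  have hmod : pAlphaModification α t = generateFrom {U | PC α t U} := by
    apply le_antisymm
    · apply sSup_le
      rintro s ⟨hst, hsP⟩
      exact le_generateFrom fun U hU => PC.isOpen_of_mem hst hsP hU
    · refine le_sSup ⟨?_, s0_PAlpha hα⟩
      exact fun U hU => TopologicalSpace.GenerateOpen.basic U (PC.basic U hU)
  rw [hmod]
  letI s0 : TopologicalSpace G := generateFrom {U | PC α t U}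
  refine @ContinuousMul.mk G s0 _ ?_
  rw [continuous_generateFrom_iff]
  intro W hW
  rw [isOpen_prod_iff]
  intro a b hab
  obtain ⟨U, V, hU, hV, haU, hbV, hsub⟩ := PC.mul_key hα ht hW a b hab
  refine ⟨U, V, TopologicalSpace.GenerateOpen.basic _ hU,
    TopologicalSpace.GenerateOpen.basic _ hV, haU, hbV, ?_⟩
  rintro ⟨x, y⟩ ⟨hx, hy⟩
  exact hsub x hx y hy
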